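/- Let k ≥ 1 and n ≥ 1 be natural numbers, let G_n = {(j₁/n, …, j_k/n) : jᵢ ∈ {0,1,…,n}} ⊂ [0,1]^k be the uniform grid with spacing 1/n, and let ω be a modulus of continuity. Then there exists a reconstruction map g : (G_n → ℝ) → ([0,1]^k → ℝ) such that for every x ∈ X_ω, sup_{τ ∈ [0,1]^k} |x(τ) − g(x|_{G_n})(τ)| ≤ ω(√k/(2n)). -/

import Mathlib

noncomputable section

/-- The unit cube $[0,1]^k$ in $\mathbb{R}^k$ with the Euclidean norm. -/
def cube (k : ℕ) : Set (EuclideanSpace ℝ (Fin k)) :=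
  {t | ∀ i, t i ∈ Set.Icc (0:ℝ) 1}

/-- The uniform grid with spacing $1/n$ in the unit cube. -/
def grid (k n : ℕ) : Set (EuclideanSpace ℝ (Fin k)) :=
  {p | ∀ i, ∃ j : ℕ, j ≤ n ∧ p i = (j : ℝ) / n}

/-- A modulus of continuity: `ω : [0,∞) → [0,∞)`, `ω 0 = 0`, nondecreasing,
continuous and subadditive (all conditions on `[0,∞)`). -/
def IsModulus (ω : ℝ → ℝ) : Prop :=
  ω 0 = 0 ∧ (∀ h, 0 ≤ h → 0 ≤ ω h) ∧ (∀ a b, 0 ≤ a → a ≤ b → ω a ≤ ω b) ∧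
  ContinuousOn ω (Set.Ici 0) ∧ ∀ a b, 0 ≤ a → 0 ≤ b → ω (a + b) ≤ ω a + ω b

/-- Membership in the class `X_ω` of functions on the unit cube admitting `ω`
as a modulus of continuity (w.r.t. the Euclidean norm). -/
def MemXomega (k : ℕ) (ω : ℝ → ℝ) (x : EuclideanSpace ℝ (Fin k) → ℝ) : Prop :=
  ∀ t ∈ cube k, ∀ s ∈ cube k, |x t - x s| ≤ ω (dist t s)

/-- (Upper bound.) There exists a reconstruction map `g` from
grid values on `G_n` such that every `x ∈ X_ω` is recovered with uniform error
at most `ω(√k/(2n))`. -/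
theorem reconstruction_error_upper_bound
    (k n : ℕ) (hk : 1 ≤ k) (hn : 1 ≤ n)
    (ω : ℝ → ℝ) (hω : IsModulus ω) :
    ∃ g : (↥(grid k n) → ℝ) → (EuclideanSpace ℝ (Fin k) → ℝ),
      ∀ x : EuclideanSpace ℝ (Fin k) → ℝ, MemXomega k ω x →
        (⨆ τ : cube k, |x τ.1 - g (fun p => x p.1) τ.1|)
          ≤ ω (Real.sqrt k / (2 * n)) := by
  obtain ⟨hω0, hωpos, hmono, hcont, hsub⟩ := hω
  have hn0 : (0:ℝ) < n := by exact_mod_cast hn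
  set p : EuclideanSpace ℝ (Fin k) → EuclideanSpace ℝ (Fin k) :=
    fun τ => WithLp.toLp 2 (fun i => ((min n ⌊τ i * n + 1/2⌋₊ : ℕ) : ℝ) / n) with hp
  have hpg : ∀ τ, p τ ∈ grid k n := fun τ i =>
    ⟨min n ⌊τ i * n + 1/2⌋₊, min_le_left _ _, rfl⟩
  refine ⟨fun v τ => v ⟨p τ, hpg τ⟩, ?_⟩
  intro x hx
  have hne : Nonempty (cube k) :=
    ⟨⟨(WithLp.toLp 2 (fun _ => 0) : EuclideanSpace ℝ (Fin k)), fun i => ⟨le_refl _, zero_le_one⟩⟩⟩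
  apply ciSup_le
  rintro ⟨τ, hτ⟩
  -- p τ is in the cube
  have hpc : p τ ∈ cube k := by
    intro i
    constructor
    · positivity
    · rw [div_le_one hn0]
      exact_mod_cast Nat.cast_le.mpr (min_le_left _ _)
  -- coordinatewise distance bound
  have hcoord : ∀ i, |τ i - p τ i| ≤ 1 / (2 * n) := by
    intro i
    obtain ⟨h0, h1⟩ := hτ i
    have ht0 : 0 ≤ τ i * n := by positivity
    have hjle : ⌊τ i * n + 1/2⌋₊ ≤ n := by
      have : τ i * n + 1/2 < n + 1 := by
        have : τ i * n ≤ n := by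
          calc τ i * n ≤ 1 * n := by nlinarith
          _ = n := one_mul _
        linarith
      exact Nat.lt_succ_iff.mp (Nat.floor_lt (by positivity)|>.mpr (by exact_mod_cast this))
    have hmin : min n ⌊τ i * n + 1/2⌋₊ = ⌊τ i * n + 1/2⌋₊ := min_eq_right hjle
    set j := ⌊τ i * n + 1/2⌋₊ with hj
    have hjup : (j : ℝ) ≤ τ i * n + 1/2 := Nat.floor_le (by positivity)
    have hjlo : τ i * n + 1/2 < j + 1 := Nat.lt_floor_add_one _
    have hpτi : p τ i = (j : ℝ) / n := by
      show ((min n ⌊τ i * n + 1/2⌋₊ : ℕ) : ℝ) / n = (j : ℝ) / n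
      rw [← hj, hmin]
    rw [hpτi, abs_le]
    constructor
    · rw [neg_le, neg_sub]
      rw [div_sub' (ne_of_gt hn0)]
      rw [div_le_div_iff₀ hn0 (by positivity)]
      nlinarith
    · rw [sub_div' (ne_of_gt hn0)]
      rw [div_le_div_iff₀ hn0 (by positivity)]
      nlinarith
  -- Euclidean distance bound
  have hdist : dist τ (p τ) ≤ Real.sqrt k / (2 * n) := by
    rw [EuclideanSpace.dist_eq]
    have hsum : (∑ i, dist (τ i) (p τ i) ^ 2) ≤ (k : ℝ) * (1 / (2 * n)) ^ 2 := by
      calc (∑ i, dist (τ i) (p τ i) ^ 2) ≤ ∑ _i : Fin k, (1 / (2 * n) : ℝ) ^ 2 := by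
            apply Finset.sum_le_sum
            intro i _
            have := hcoord i
            rw [Real.dist_eq]
            exact pow_le_pow_left₀ (abs_nonneg _) this 2
        _ = (k : ℝ) * (1 / (2 * n)) ^ 2 := by
            rw [Finset.sum_const]; simp [mul_comm]
    calc Real.sqrt (∑ i, dist (τ i) (p τ i) ^ 2)
        ≤ Real.sqrt ((k : ℝ) * (1 / (2 * n)) ^ 2) := Real.sqrt_le_sqrt hsum
      _ = Real.sqrt k * (1 / (2 * n)) := by
          rw [Real.sqrt_mul (by positivity), Real.sqrt_sq (by positivity)]
      _ = Real.sqrt k / (2 * n) := by ring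
  calc |x τ - x (p τ)| ≤ ω (dist τ (p τ)) := hx τ hτ (p τ) hpc
    _ ≤ ω (Real.sqrt k / (2 * n)) := hmono _ _ dist_nonneg hdist
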